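/- Existence of anomalous negativity for non-commuting projectors: let E and Π be orthogonal projections on ℂⁿ with E Π ≠ Π E. Then there exists a density matrix ρ such that Re tr(ρ E Π) < 0. (Equivalently, the Hermitian matrix (EΠ + ΠE)/2 has a negative eigenvalue whenever E and Π do not commute; thus in the presence of non-commutativity there is always a state witnessing negativity of the work quasi-probability, and hence contextuality of the weak-measurement protocol.) -/

import Mathlib

open Matrix
open scoped ComplexOrder

private lemma star_quad_form {n : ℕ} (M : Matrix (Fin n) (Fin n) ℂ) (x : Fin n → ℂ) :
    star (star x ⬝ᵥ (M *ᵥ x)) = star x ⬝ᵥ (Mᴴ *ᵥ x) := by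
  rw [← star_dotProduct_star, star_star, Matrix.star_mulVec]
  exact (Matrix.dotProduct_mulVec _ _ _).symm

/-- Existence of anomalous negativity for non-commuting projectors:
if `E` and `P` are orthogonal projections on `ℂⁿ` with `E P ≠ P E`, then there exists a
density matrix `ρ` such that `Re tr(ρ E P) < 0`. -/
theorem exists_state_with_negative_weak_value
    (n : ℕ) (E P : Matrix (Fin n) (Fin n) ℂ)
    (hE : E.IsHermitian) (hE2 : E * E = E)
    (hP : P.IsHermitian) (hP2 : P * P = P)
    (hnc : E * P ≠ P * E) :
    ∃ ρ : Matrix (Fin n) (Fin n) ℂ,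
      ρ.PosSemidef ∧ ρ.trace = 1 ∧ (Matrix.trace (ρ * E * P)).re < 0 := by
  classical
  set S : Matrix (Fin n) (Fin n) ℂ := E * P + P * E with hSdef
  have hS : S.IsHermitian := by
    unfold Matrix.IsHermitian
    rw [hSdef, conjTranspose_add, conjTranspose_mul, conjTranspose_mul, hE.eq, hP.eq, add_comm]
  have h1 : (1 - E) * E = 0 := by rw [sub_mul, one_mul, hE2, sub_self]
  have h2 : E * (1 - E) = 0 := by rw [mul_sub, mul_one, hE2, sub_self]
  have hPE : (P * E) * (1 - E) = 0 := by rw [mul_assoc, h2, mul_zero]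
  -- S is not positive semidefinite
  have hnotPSD : ¬ S.PosSemidef := by
    intro h
    obtain ⟨B, hB⟩ : ∃ B : Matrix (Fin n) (Fin n) ℂ, S = Bᴴ * B := by
      open scoped MatrixOrder in exact CStarAlgebra.nonneg_iff_eq_star_mul_self.mp h.nonneg
    have key : (1 - E) * S * (1 - E) = 0 := by
      rw [hSdef, mul_add, ← mul_assoc, h1, zero_mul, zero_add, mul_assoc, hPE, mul_zero]
    have hB0 : B * (1 - E) = 0 := by
      have h1E : (1 - E)ᴴ = 1 - E := by
        rw [conjTranspose_sub, conjTranspose_one, hE.eq]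
      have : (B * (1 - E))ᴴ * (B * (1 - E)) = 0 := by
        rw [conjTranspose_mul, h1E, mul_assoc, ← mul_assoc Bᴴ, ← hB,
          ← mul_assoc, key]
      exact Matrix.conjTranspose_mul_self_eq_zero.mp this
    have hS0 : S * (1 - E) = 0 := by rw [hB, mul_assoc, hB0, mul_zero]
    have hEPE : E * P * (1 - E) = 0 := by
      have := hS0
      rw [hSdef, add_mul, hPE, add_zero] at this
      exact this
    have hEP : E * P = E * P * E := by
      have := hEPE
      rw [mul_sub, mul_one, sub_eq_zero] at this
      exact this
    apply hnc
    have h3 : (E * P)ᴴ = P * E := by rw [conjTranspose_mul, hE.eq, hP.eq]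
    have h4 : (E * P * E)ᴴ = E * P * E := by
      rw [conjTranspose_mul, h3, hE.eq, ← mul_assoc]
    calc E * P = E * P * E := hEP
      _ = (E * P * E)ᴴ := h4.symm
      _ = (E * P)ᴴ := by rw [← hEP]
      _ = P * E := h3
  -- extract a vector with negative quadratic form
  rw [Matrix.posSemidef_iff_dotProduct_mulVec, not_and, not_forall] at hnotPSD
  obtain ⟨x, hx⟩ := hnotPSD hS
  set q : ℂ := star x ⬝ᵥ (S *ᵥ x) with hq
  have hqreal : star q = q := by rw [hq, star_quad_form, hS.eq]
  have hqim : q.im = 0 := Complex.conj_eq_iff_im.mp hqreal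
  have hqre : q.re < 0 := by
    by_contra hcon
    push_neg at hcon
    exact hx (Complex.le_def.mpr ⟨by simpa using hcon, by simp [hqim]⟩)
  -- the real part of the E*P form is negative
  set t : ℂ := star x ⬝ᵥ ((E * P) *ᵥ x) with ht
  have hqt : q = t + star t := by
    rw [ht, star_quad_form, conjTranspose_mul, hE.eq, hP.eq, hq, hSdef,
      Matrix.add_mulVec, dotProduct_add]
  have htre : t.re < 0 := by
    have : q.re = t.re + t.re := by
      rw [hqt]; simp [Complex.add_re, Complex.conj_re]
    clear hx
    linarith
  -- the normalisation constant
  set c : ℝ := ∑ i, Complex.normSq (x i) with hc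
  have hxne : x ≠ 0 := by
    intro h0
    rw [ht, h0] at htre
    simp at htre
  have hcpos : 0 < c := by
    rw [hc]
    obtain ⟨i, hi⟩ := Function.ne_iff.mp hxne
    exact Finset.sum_pos' (fun j _ => Complex.normSq_nonneg _)
      ⟨i, Finset.mem_univ i, by simpa [Complex.normSq_pos] using hi⟩
  refine ⟨((c : ℂ))⁻¹ • vecMulVec x (star x), ?_, ?_, ?_⟩
  · rw [Matrix.posSemidef_iff_dotProduct_mulVec]
    constructor
    · unfold Matrix.IsHermitian
      ext i j
      simp [Matrix.conjTranspose_apply, Matrix.vecMulVec_apply, Matrix.smul_apply,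
        mul_comm, Complex.conj_ofReal]
    · intro y
      have hBv : vecMulVec x (star x) *ᵥ y = (star x ⬝ᵥ y) • x := by
        funext i
        simp only [Matrix.mulVec, dotProduct, Matrix.vecMulVec_apply, Pi.smul_apply,
          smul_eq_mul, Pi.star_apply, Finset.sum_mul]
        exact Finset.sum_congr rfl fun j _ => by ring
      rw [Matrix.smul_mulVec, dotProduct_smul, hBv, dotProduct_smul,
        smul_eq_mul, smul_eq_mul]
      have hsd : star y ⬝ᵥ x = star (star x ⬝ᵥ y) := star_dotProduct y x
      rw [hsd]
      have h1 : (0 : ℂ) ≤ ((c : ℂ))⁻¹ := by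
        rw [← Complex.ofReal_inv]
        exact_mod_cast (inv_nonneg.mpr hcpos.le)
      exact mul_nonneg h1 (mul_star_self_nonneg _)
  · rw [Matrix.trace_smul]
    have : (vecMulVec x (star x)).trace = (c : ℂ) := by
      rw [Matrix.trace, hc]
      push_cast
      apply Finset.sum_congr rfl
      intro i _
      rw [Matrix.diag_apply, Matrix.vecMulVec_apply]
      simpa using (Complex.mul_conj (x i))
    rw [this, smul_eq_mul, inv_mul_cancel₀]
    exact_mod_cast hcpos.ne'
  · have htr : (((c : ℂ))⁻¹ • vecMulVec x (star x)) * E * P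
        = ((c : ℂ))⁻¹ • (vecMulVec x (star x) * (E * P)) := by
      rw [Matrix.smul_mul, Matrix.smul_mul, mul_assoc]
    rw [htr, Matrix.trace_smul]
    have htrval : (vecMulVec x (star x) * (E * P)).trace = t := by
      rw [Matrix.trace, ht]
      simp only [Matrix.diag_apply, Matrix.mul_apply, Matrix.vecMulVec_apply,
        dotProduct, Matrix.mulVec, Pi.star_apply, Finset.mul_sum]
      rw [Finset.sum_comm]
      apply Finset.sum_congr rfl
      intro j _
      apply Finset.sum_congr rfl
      intro i _
      simp only [Finset.mul_sum, Finset.sum_mul]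
      exact Finset.sum_congr rfl fun k _ => by ring
    rw [htrval, smul_eq_mul]
    have : (((c : ℂ))⁻¹ * t).re = c⁻¹ * t.re := by
      rw [← Complex.ofReal_inv, Complex.re_ofReal_mul]
    rw [this]
    exact mul_neg_of_pos_of_neg (inv_pos.mpr hcpos) htre
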